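/- Let μ > 0, n ∈ ℕ, and T(n) as above. For all 2 ≤ i ≤ j ≤ n, |(T(n)^{-1})_{ij}| ≥ 2(i−1) μ^{j−i} / (d_{i−1} d_i ⋯ d_j). -/

import Mathlib

/-- Shifted leading principal minors of the tridiagonal matrix. -/
def tpAux (μ : ℝ) : ℕ → ℝ
  | 0 => 0
  | 1 => 1
  | (k+2) => 2*((k:ℝ)+1) * tpAux μ (k+1) + μ^2 * tpAux μ k

lemma tpAux_nonneg (μ : ℝ) : ∀ k, 0 ≤ tpAux μ k := by
  intro k
  induction k using Nat.strong_induction_on with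
  | _ k ih =>
    match k with
    | 0 => simp [tpAux]
    | 1 => simp [tpAux]
    | (k+2) =>
      have h1 := ih (k+1) (by omega)
      have h0 := ih k (by omega)
      have : (0:ℝ) ≤ (k:ℝ) + 1 := by positivity
      simp only [tpAux]
      nlinarith [sq_nonneg μ]

lemma tpAux_pos (μ : ℝ) : ∀ k, 1 ≤ k → 0 < tpAux μ k := by
  intro k
  induction k using Nat.strong_induction_on with
  | _ k ih =>
    match k with
    | 0 => intro h; omega
    | 1 => intro _; simp [tpAux]
    | (k+2) =>
      intro _
      have h1 : 0 < tpAux μ (k+1) := ih (k+1) (by omega) (by omega)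
      have h0 : 0 ≤ tpAux μ k := tpAux_nonneg μ k
      simp only [tpAux]
      nlinarith [sq_nonneg μ]

lemma ifsum_aux {n : ℕ} (c : ℕ) (g : Fin n → ℝ) :
    ∑ k : Fin n, (if (k:ℕ) = c then g k else 0) =
      if hc : c < n then g ⟨c, hc⟩ else 0 := by
  split_ifs with hc
  · rw [Finset.sum_eq_single_of_mem ⟨c, hc⟩ (Finset.mem_univ _)
      (fun b _ hb => if_neg fun h => hb (Fin.ext h))]
    exact if_pos rfl
  · refine Finset.sum_eq_zero fun b _ => if_neg fun h => hc ?_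
    exact h ▸ b.isLt

set_option maxHeartbeats 2000000 in
theorem stmt_11 (μ : ℝ) (hμ : 0 < μ) (n : ℕ)
    (T : Matrix (Fin n) (Fin n) ℝ)
    (hT : ∀ i j : Fin n, T i j =
      if (i : ℕ) = j then (2 * ((j : ℕ) + 1) : ℝ)
      else if (i : ℕ) = (j : ℕ) + 1 then μ
      else if (j : ℕ) = (i : ℕ) + 1 then -μ
      else 0)
    (d : ℕ → ℝ)
    (hdn : d n = 2 * n)
    (hdrec : ∀ j : ℕ, 1 ≤ j → j < n → d j = 2 * j + μ ^ 2 / d (j + 1))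
    (hdpos : ∀ j : ℕ, 1 ≤ j → j ≤ n → 0 < d j) :
    ∀ i j : Fin n, 1 ≤ (i : ℕ) → (i : ℕ) ≤ j →
      2 * (i : ℕ) * μ ^ ((j : ℕ) - i) / ∏ l ∈ Finset.Icc (i : ℕ) ((j : ℕ) + 1), d l ≤
        |T⁻¹ i j| := by
  -- Step A: T is invertible.
  have hTinv : T * T⁻¹ = 1 := by
    have key : ∀ v : Fin n → ℝ, T.mulVec v = 0 → v = 0 := by
      intro v hv
      have hrow : ∀ r : Fin n, ∑ k, T r k * v k = 0 := by
        intro r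
        have := congrFun hv r
        simpa [Matrix.mulVec, dotProduct] using this
      have hsym : ∀ r k : Fin n, T r k + T k r = if r = k then (4*((r:ℕ)+1) : ℝ) else 0 := by
        intro r k
        rcases eq_or_ne r k with rfl | h
        · rw [hT]; simp; ring
        · have hne : (r:ℕ) ≠ (k:ℕ) := fun hc => h (Fin.ext hc)
          rw [hT, hT, if_neg h]
          split_ifs <;> first | omega | ring
      have hz : ∑ r : Fin n, (4*((r:ℕ)+1) : ℝ) * v r ^ 2 = 0 := by
        have h1 : ∑ r : Fin n, ∑ k : Fin n, v r * T r k * v k = 0 := by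
          refine Finset.sum_eq_zero fun r _ => ?_
          have : ∑ k : Fin n, v r * T r k * v k = v r * ∑ k, T r k * v k := by
            rw [Finset.mul_sum]; refine Finset.sum_congr rfl fun k _ => by ring
          rw [this, hrow, mul_zero]
        have h2 : ∑ r : Fin n, ∑ k : Fin n, v r * T k r * v k = 0 := by
          rw [Finset.sum_comm]
          refine Finset.sum_eq_zero fun k _ => ?_
          have : ∑ r : Fin n, v r * T k r * v k = v k * ∑ r, T k r * v r := by
            rw [Finset.mul_sum]; refine Finset.sum_congr rfl fun r _ => by ring
          rw [this, hrow, mul_zero]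
        calc ∑ r : Fin n, (4*((r:ℕ)+1) : ℝ) * v r ^ 2
            = ∑ r : Fin n, ∑ k : Fin n, (v r * T r k * v k + v r * T k r * v k) := by
              refine Finset.sum_congr rfl fun r _ => ?_
              rw [eq_comm]
              have hpt : ∀ k : Fin n, v r * T r k * v k + v r * T k r * v k
                  = (if r = k then (4*((r:ℕ)+1) : ℝ) * v r ^2 else 0) := by
                intro k
                have hs := hsym r k
                rcases eq_or_ne r k with rfl | h
                · simp only [eq_self_iff_true, if_true] at hs ⊢
                  linear_combination (v r * v r) * hs
                · simp only [if_neg h] at hs ⊢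
                  linear_combination (v r * v k) * hs
              simp_rw [hpt]
              simp
          _ = 0 := by simp_rw [Finset.sum_add_distrib]; rw [h1, h2, add_zero]
      funext r
      have hnn : ∀ s ∈ (Finset.univ : Finset (Fin n)), (0:ℝ) ≤ (4*((s:ℕ)+1) : ℝ) * v s ^ 2 := by
        intro s _; positivity
      have h0 := (Finset.sum_eq_zero_iff_of_nonneg hnn).mp hz r (Finset.mem_univ r)
      have h4 : (0:ℝ) < 4*((r:ℕ)+1) := by positivity
      have hsq : v r ^ 2 = 0 := by
        rcases mul_eq_zero.mp h0 with h | h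
        · exact absurd h (ne_of_gt h4)
        · exact h
      simpa using pow_eq_zero_iff (n := 2) (by norm_num) |>.mp hsq
    have hinj : Function.Injective T.mulVec := by
      intro a b hab
      have : T.mulVec (a - b) = 0 := by rw [Matrix.mulVec_sub, hab, sub_self]
      exact sub_eq_zero.mp (key _ this)
    exact Matrix.mul_nonsing_inv T ((Matrix.isUnit_iff_isUnit_det T).mp
      (Matrix.mulVec_injective_iff_isUnit.mp hinj))
  intro i j hi1 hij
  have jn : (j:ℕ) < n := j.isLt
  have hj1 : 1 ≤ (j:ℕ) := le_trans hi1 hij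
  set x : ℕ → ℝ := fun k => if h : k < n then T⁻¹ ⟨k, h⟩ j else 0 with hx
  have hxbig : ∀ m : ℕ, ¬ m < n → x m = 0 := by
    intro m hm; rw [hx]; simp [hm]
  -- Step C: the row equations.
  have hE : ∀ r : ℕ, r < n →
      (if 1 ≤ r then μ * x (r-1) else 0) + 2*((r:ℝ)+1) * x r - μ * x (r+1)
        = (if r = (j:ℕ) then (1:ℝ) else 0) := by
    intro r hr
    have hxk : ∀ k : Fin n, T⁻¹ k j = x (k:ℕ) := by
      intro k; rw [hx]; simp [k.isLt]
    have hmul := congrFun (congrFun hTinv ⟨r, hr⟩) j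
    rw [Matrix.mul_apply, Matrix.one_apply] at hmul
    have hrhs : (if (⟨r, hr⟩ : Fin n) = j then (1:ℝ) else 0)
        = (if r = (j:ℕ) then (1:ℝ) else 0) := by
      by_cases h : r = (j:ℕ) <;> simp [h, Fin.ext_iff]
    rw [hrhs] at hmul
    rcases r with _ | r'
    · have hsplit : ∀ k : Fin n, T ⟨0, hr⟩ k * T⁻¹ k j =
          (if (k:ℕ) = 0 then 2*(((k:ℕ):ℝ)+1) * x (k:ℕ) else 0)
            + (if (k:ℕ) = 1 then -μ * x (k:ℕ) else 0) := by
        intro k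
        rw [hT, hxk]
        have h0 : ((⟨0, hr⟩ : Fin n) : ℕ) = 0 := rfl
        rw [h0]
        split_ifs <;> first | omega | contradiction | ring
      rw [Finset.sum_congr rfl (fun k _ => hsplit k), Finset.sum_add_distrib,
        ifsum_aux, ifsum_aux, dif_pos hr] at hmul
      by_cases h1 : 1 < n
      · rw [dif_pos h1] at hmul
        simp only [Fin.val_mk] at hmul
        rw [← hmul, if_neg (show ¬(1 ≤ 0) by omega)]
        norm_num
        try ring
      · rw [dif_neg h1] at hmul
        simp only [Fin.val_mk] at hmul
        have hx1 : x 1 = 0 := hxbig 1 h1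
        rw [← hmul, if_neg (show ¬(1 ≤ 0) by omega)]
        norm_num [hx1]
        try ring
    · have hsplit : ∀ k : Fin n, T ⟨r'+1, hr⟩ k * T⁻¹ k j =
          (if (k:ℕ) = r' then μ * x (k:ℕ) else 0)
            + ((if (k:ℕ) = r'+1 then 2*(((k:ℕ):ℝ)+1) * x (k:ℕ) else 0)
            + (if (k:ℕ) = r'+2 then -μ * x (k:ℕ) else 0)) := by
        intro k
        rw [hT, hxk]
        have h0 : ((⟨r'+1, hr⟩ : Fin n) : ℕ) = r'+1 := rfl
        rw [h0]
        split_ifs <;> first | omega | contradiction | ring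
      rw [Finset.sum_congr rfl (fun k _ => hsplit k), Finset.sum_add_distrib,
        Finset.sum_add_distrib, ifsum_aux, ifsum_aux, ifsum_aux,
        dif_pos (show r' < n by omega), dif_pos hr] at hmul
      have e2 : r'+1+1 = r'+2 := by omega
      by_cases h1 : r'+2 < n
      · rw [dif_pos h1] at hmul
        simp only [Fin.val_mk] at hmul
        rw [← hmul, if_pos (show 1 ≤ r'+1 by omega)]
        simp only [Nat.add_sub_cancel, e2]
        push_cast
        ring
      · rw [dif_neg h1] at hmul
        simp only [Fin.val_mk] at hmul
        have hx1 : x (r'+2) = 0 := hxbig _ h1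
        rw [← hmul, if_pos (show 1 ≤ r'+1 by omega)]
        simp only [Nat.add_sub_cancel, e2, hx1]
        push_cast
        ring
  -- Step D: downward recursion above row j.
  have hlast : ∀ r : ℕ, (j:ℕ) < r → r = n-1 → d (r+1) * x r = -(μ * x (r-1)) := by
    intro r hjr hr
    have hrn : r < n := by omega
    have hE1 := hE r hrn
    rw [if_pos (show 1 ≤ r by omega), if_neg (show ¬ r = (j:ℕ) by omega)] at hE1
    have hx0 : x (r+1) = 0 := hxbig _ (by omega)
    rw [hx0] at hE1
    have hn : r + 1 = n := by omega
    have hc : (n:ℝ) = (r:ℝ)+1 := by exact_mod_cast congrArg (Nat.cast (R := ℝ)) hn.symm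
    rw [hn, hdn, hc]
    linarith [hE1]
  have down : ∀ m r : ℕ, (j:ℕ) < r → r < n → n - 1 - r ≤ m →
      d (r+1) * x r = -(μ * x (r-1)) := by
    intro m
    induction m with
    | zero =>
      intro r hjr hrn hm
      exact hlast r hjr (by omega)
    | succ m ih =>
      intro r hjr hrn hm
      by_cases hr : r = n-1
      · exact hlast r hjr hr
      · have h2 : d (r+2) * x (r+1) = -(μ * x r) := by
          have := ih (r+1) (by omega) (by omega) (by omega)
          simpa [Nat.add_sub_cancel] using this
        have hd2 : 0 < d (r+2) := hdpos (r+2) (by omega) (by omega)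
        have hE1 := hE r hrn
        rw [if_pos (show 1 ≤ r by omega), if_neg (show ¬ r = (j:ℕ) by omega)] at hE1
        have hdd : d (r+1) * d (r+2) = 2*((r:ℝ)+1) * d (r+2) + μ^2 := by
          rw [hdrec (r+1) (by omega) (by omega)]
          field_simp
          try push_cast
          try ring
        apply mul_right_cancel₀ (ne_of_gt hd2)
        linear_combination x r * hdd + μ * h2 + d (r+2) * hE1
  -- Step E: the pivotal row j equation.
  have hEj : μ * x ((j:ℕ)-1) + d ((j:ℕ)+1) * x (j:ℕ) = 1 := by
    have hEr := hE (j:ℕ) jn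
    rw [if_pos hj1, if_pos rfl] at hEr
    by_cases hjn : (j:ℕ)+1 < n
    · have hdown : d ((j:ℕ)+2) * x ((j:ℕ)+1) = -(μ * x (j:ℕ)) := by
        have := down n ((j:ℕ)+1) (by omega) (by omega) (by omega)
        simpa [Nat.add_sub_cancel] using this
      have hd2 : 0 < d ((j:ℕ)+2) := hdpos _ (by omega) (by omega)
      have hdd : d ((j:ℕ)+1) * d ((j:ℕ)+2) = 2*(((j:ℕ):ℝ)+1) * d ((j:ℕ)+2) + μ^2 := by
        rw [hdrec ((j:ℕ)+1) (by omega) (by omega)]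
        field_simp
        try push_cast
        try ring
      apply mul_right_cancel₀ (ne_of_gt hd2)
      linear_combination x (j:ℕ) * hdd + μ * hdown + d ((j:ℕ)+2) * hEr
    · have hx0 : x ((j:ℕ)+1) = 0 := hxbig _ hjn
      have hn : (j:ℕ) + 1 = n := by omega
      have hc : (((j:ℕ):ℝ)+1) = (n:ℝ) := by exact_mod_cast congrArg (Nat.cast (R := ℝ)) hn
      rw [hx0] at hEr
      rw [hn, hdn, ← hc]
      linarith [hEr]
  -- Step F: upward recursion below row j.
  have hup : ∀ r : ℕ, r ≤ (j:ℕ) → μ^r * x r = tpAux μ (r+1) * x 0 := by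
    intro r
    induction r using Nat.strong_induction_on with
    | _ r ih =>
      match r with
      | 0 => intro _; simp [tpAux]
      | 1 =>
        intro h1j
        have hE0 := hE 0 (by omega)
        rw [if_neg (by omega), if_neg (show ¬(0:ℕ) = (j:ℕ) by omega)] at hE0
        have ht2 : tpAux μ 2 = 2 := by norm_num [tpAux]
        rw [pow_one, ht2]
        norm_num at hE0
        linarith [hE0]
      | (r+2) =>
        intro hrj
        have h0 := ih r (by omega) (by omega)
        have h1 := ih (r+1) (by omega) (by omega)
        have hE1 := hE (r+1) (by omega)
        rw [if_pos (by omega), if_neg (show ¬ r+1 = (j:ℕ) by omega)] at hE1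
        have ht : tpAux μ (r+3) = 2*((r:ℝ)+1+1)*tpAux μ (r+2) + μ^2 * tpAux μ (r+1) := by
          show tpAux μ ((r+1)+2) = _
          rw [tpAux]
          push_cast
          ring
        have e2 : r+1+1 = r+2 := by omega
        rw [e2] at hE1
        simp only [Nat.add_sub_cancel] at hE1
        push_cast at hE1
        have e3 : r+2+1 = r+3 := by omega
        rw [e3]
        linear_combination (-(μ^(r+1))) * hE1 + μ^2 * h0 + 2*((r:ℝ)+2) * h1 + (-(x 0)) * ht
  -- Step G: closed form for x.
  obtain ⟨j', hj'⟩ : ∃ j', (j:ℕ) = j'+1 := ⟨(j:ℕ)-1, by omega⟩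
  have hD : 0 < d ((j:ℕ)+1) * tpAux μ ((j:ℕ)+1) + μ^2 * tpAux μ (j:ℕ) := by
    have h1 : 0 < d ((j:ℕ)+1) := hdpos _ (by omega) (by omega)
    have h2 : 0 < tpAux μ ((j:ℕ)+1) := tpAux_pos μ _ (by omega)
    have h3 : 0 ≤ tpAux μ (j:ℕ) := tpAux_nonneg μ _
    nlinarith [sq_nonneg μ]
  have hx0D : (d ((j:ℕ)+1) * tpAux μ ((j:ℕ)+1) + μ^2 * tpAux μ (j:ℕ)) * x 0 = μ^(j:ℕ) := by
    have h0 := hup j' (by omega)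
    have h1 := hup (j:ℕ) le_rfl
    rw [hj'] at h1 hEj ⊢
    simp only [Nat.add_sub_cancel] at hEj
    linear_combination μ^(j'+1) * hEj + (-(μ^2)) * h0 + (-(d (j'+2))) * h1
  have hμi : (0:ℝ) < μ^(i:ℕ) := pow_pos hμ _
  have hpow : μ^((j:ℕ)-(i:ℕ)) * μ^(i:ℕ) = μ^(j:ℕ) := by
    rw [← pow_add]; congr 1; omega
  have hxi : x (i:ℕ) = tpAux μ ((i:ℕ)+1) * μ^((j:ℕ)-(i:ℕ))
      / (d ((j:ℕ)+1) * tpAux μ ((j:ℕ)+1) + μ^2 * tpAux μ (j:ℕ)) := by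
    have hi := hup (i:ℕ) hij
    rw [eq_div_iff (ne_of_gt hD)]
    apply mul_left_cancel₀ (ne_of_gt hμi)
    linear_combination tpAux μ ((i:ℕ)+1) * hx0D + (d ((j:ℕ)+1) * tpAux μ ((j:ℕ)+1)
      + μ^2 * tpAux μ (j:ℕ)) * hi + (-(tpAux μ ((i:ℕ)+1))) * hpow
  -- Step H: the product inequality by induction.
  have Q : ∀ m : ℕ, (i:ℕ) ≤ m → m < n →
      2*((i:ℕ):ℝ)*tpAux μ (m+1) + 2*((i:ℕ):ℝ)*μ^2*tpAux μ m / d (m+1)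
        ≤ tpAux μ ((i:ℕ)+1) * ∏ l ∈ Finset.Icc (i:ℕ) m, d l := by
    intro m him
    induction m, him using Nat.le_induction with
    | base =>
      intro hin
      rw [Finset.Icc_self, Finset.prod_singleton]
      have hdi : d (i:ℕ) = 2*((i:ℕ):ℝ) + μ^2/d ((i:ℕ)+1) := by
        have := hdrec (i:ℕ) hi1 hin
        push_cast at this ⊢
        exact this
      have hdi1 : 0 < d ((i:ℕ)+1) := hdpos _ (by omega) (by omega)
      have htp : 2*((i:ℕ):ℝ)*tpAux μ (i:ℕ) ≤ tpAux μ ((i:ℕ)+1) := by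
        obtain ⟨i', hi'⟩ : ∃ i', (i:ℕ) = i'+1 := ⟨(i:ℕ)-1, by omega⟩
        rw [hi']
        show _ ≤ tpAux μ (i'+2)
        rw [tpAux]
        push_cast
        nlinarith [tpAux_nonneg μ i', sq_nonneg μ]
      have h2 : 2*((i:ℕ):ℝ)*μ^2*tpAux μ (i:ℕ) / d ((i:ℕ)+1)
          ≤ μ^2*tpAux μ ((i:ℕ)+1) / d ((i:ℕ)+1) := by
        apply (div_le_div_iff_of_pos_right hdi1).mpr
        nlinarith [htp, sq_nonneg μ]
      have h3 : tpAux μ ((i:ℕ)+1) * (2*((i:ℕ):ℝ) + μ^2/d ((i:ℕ)+1))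
          = 2*((i:ℕ):ℝ)*tpAux μ ((i:ℕ)+1) + μ^2*tpAux μ ((i:ℕ)+1)/d ((i:ℕ)+1) := by
        ring
      rw [hdi, h3]
      linarith [h2]
    | succ m hm ihm =>
      intro hm1n
      have ih := ihm (by omega)
      have hdm1 : 0 < d (m+1) := hdpos _ (by omega) (by omega)
      have hdm2 : 0 < d (m+2) := hdpos _ (by omega) (by omega)
      rw [Finset.prod_Icc_succ_top (show (i:ℕ) ≤ m+1 by omega)]
      have step := mul_le_mul_of_nonneg_right ih hdm1.le
      have htprec : tpAux μ (m+2) = 2*((m:ℝ)+1)*tpAux μ (m+1) + μ^2*tpAux μ m := by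
        rw [tpAux]
      have hdr : d (m+1) = 2*((m:ℝ)+1) + μ^2/d (m+2) := by
        have := hdrec (m+1) (by omega) (by omega)
        push_cast at this ⊢
        exact this
      calc 2*((i:ℕ):ℝ)*tpAux μ (m+1+1) + 2*((i:ℕ):ℝ)*μ^2*tpAux μ (m+1) / d (m+1+1)
          = (2*((i:ℕ):ℝ)*tpAux μ (m+1) + 2*((i:ℕ):ℝ)*μ^2*tpAux μ m / d (m+1)) * d (m+1) := by
            have e1 : m+1+1 = m+2 := by omega
            rw [e1, htprec, hdr]
            field_simp
            ring
        _ ≤ tpAux μ ((i:ℕ)+1) * (∏ l ∈ Finset.Icc (i:ℕ) m, d l) * d (m+1) := step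
        _ = tpAux μ ((i:ℕ)+1) * ((∏ l ∈ Finset.Icc (i:ℕ) m, d l) * d (m+1)) := by ring
  -- Step I: conclusion.
  have hQj := Q (j:ℕ) hij jn
  have hdj1 : 0 < d ((j:ℕ)+1) := hdpos _ (by omega) (by omega)
  have hsplitP : ∏ l ∈ Finset.Icc (i:ℕ) ((j:ℕ)+1), d l
      = (∏ l ∈ Finset.Icc (i:ℕ) (j:ℕ), d l) * d ((j:ℕ)+1) :=
    Finset.prod_Icc_succ_top (show (i:ℕ) ≤ (j:ℕ)+1 by omega) d
  have hP : 0 < ∏ l ∈ Finset.Icc (i:ℕ) ((j:ℕ)+1), d l := by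
    apply Finset.prod_pos
    intro l hl
    rw [Finset.mem_Icc] at hl
    exact hdpos l (by omega) (by omega)
  have key2 : 2*((i:ℕ):ℝ)*(d ((j:ℕ)+1) * tpAux μ ((j:ℕ)+1) + μ^2 * tpAux μ (j:ℕ))
      ≤ tpAux μ ((i:ℕ)+1) * ∏ l ∈ Finset.Icc (i:ℕ) ((j:ℕ)+1), d l := by
    have step := mul_le_mul_of_nonneg_right hQj hdj1.le
    calc 2*((i:ℕ):ℝ)*(d ((j:ℕ)+1) * tpAux μ ((j:ℕ)+1) + μ^2 * tpAux μ (j:ℕ))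
        = (2*((i:ℕ):ℝ)*tpAux μ ((j:ℕ)+1) + 2*((i:ℕ):ℝ)*μ^2*tpAux μ (j:ℕ) / d ((j:ℕ)+1))
            * d ((j:ℕ)+1) := by
          field_simp
      _ ≤ tpAux μ ((i:ℕ)+1) * (∏ l ∈ Finset.Icc (i:ℕ) (j:ℕ), d l) * d ((j:ℕ)+1) := step
      _ = tpAux μ ((i:ℕ)+1) * ∏ l ∈ Finset.Icc (i:ℕ) ((j:ℕ)+1), d l := by
          rw [hsplitP]; ring
  have hxabs : x (i:ℕ) ≤ |T⁻¹ i j| := by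
    have : x (i:ℕ) = T⁻¹ i j := by
      rw [hx]
      simp [i.isLt]
    rw [this]
    exact le_abs_self _
  refine le_trans ?_ hxabs
  rw [hxi, div_le_div_iff₀ hP hD]
  have hμji : (0:ℝ) < μ^((j:ℕ)-(i:ℕ)) := pow_pos hμ _
  nlinarith [key2, hμji, mul_le_mul_of_nonneg_left key2 hμji.le]
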